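/- Shifted invariants Poisson commute: let g be a Lie algebra with invariant inner product, f and h adjoint-invariant smooth functions on g (so [∇f(z),z]=0=[∇h(z),z] for all z), and a ∈ g. Then for all λ, μ ∈ ℝ the functions x ↦ f(x+λa) and x ↦ h(x+μa) Lie–Poisson commute on g. -/

import Mathlib

open RealInnerProductSpace NormedSpace

section Aux

variable {E : Type*} [NormedAddCommGroup E] [InnerProductSpace ℝ E] [FiniteDimensional ℝ E]

lemma grad_inner' (g : E → ℝ) (x v : E) : ⟪gradient g x, v⟫ = fderiv ℝ g x v := by
  rw [gradient]; exact InnerProductSpace.toDual_symm_apply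

lemma bk_skew' (bk : E →ₗ[ℝ] E →ₗ[ℝ] E) (hskew : ∀ x : E, bk x x = 0) (x y : E) :
    bk x y = - bk y x := by
  have h := hskew (x + y)
  simp only [map_add, LinearMap.add_apply, hskew, zero_add, add_zero] at h
  exact eq_neg_of_add_eq_zero_right h

/-- Key analytic lemma: if `F` commutes with `u`, then `F` commutes with the gradient
at `u` of any adjoint-invariant differentiable function. -/
lemma bk_grad_of_bk_eq_zero
    (bk : E →ₗ[ℝ] E →ₗ[ℝ] E)
    (hskew : ∀ x : E, bk x x = 0)
    (hinv : ∀ x y z : E, ⟪bk x y, z⟫ = ⟪x, bk y z⟫)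
    (h : E → ℝ) (hhd : Differentiable ℝ h)
    (hh : ∀ z : E, bk (gradient h z) z = 0)
    (F u : E) (hFu : bk F u = 0) :
    bk F (gradient h u) = 0 := by
  set A : E →L[ℝ] E := LinearMap.toContinuousLinearMap (bk F) with hA
  -- the directional derivative of `h` along the adjoint field of `F` vanishes
  have horth : ∀ w : E, fderiv ℝ h w (A w) = 0 := by
    intro w
    have h1 : (A w : E) = bk F w := rfl
    rw [← grad_inner', h1, bk_skew' bk hskew F w]
    have h2 : ⟪bk (gradient h w) w, F⟫ = ⟪gradient h w, bk w F⟫ := hinv _ _ _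
    rw [hh w] at h2
    simp only [inner_zero_left] at h2
    rw [inner_neg_right, ← h2, neg_zero]
  -- derivative facts about the flow `t ↦ exp (t • A)` applied to a vector
  have hflow : ∀ (z : E) (t : ℝ),
      HasDerivAt (fun s : ℝ => exp (s • A) z) (A (exp (t • A) z)) t := by
    intro z t
    have h1 := (hasDerivAt_exp_smul_const' (𝕂 := ℝ) A t).clm_apply (hasDerivAt_const t z)
    simpa using h1
  -- `h` is constant along the flow
  have hconst : ∀ (z : E) (t : ℝ), h (exp (t • A) z) = h z := by
    intro z
    have hd : ∀ t : ℝ, HasDerivAt (fun s : ℝ => h (exp (s • A) z)) 0 t := by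
      intro t
      have := ((hhd (exp (t • A) z)).hasFDerivAt).comp_hasDerivAt t (hflow z t)
      rw [horth] at this
      exact this
    intro t
    have := is_const_of_deriv_eq_zero (f := fun s : ℝ => h (exp (s • A) z))
      (fun s => (hd s).differentiableAt) (fun s => (hd s).deriv) t 0
    simpa [exp_zero] using this
  -- the flow fixes `u`
  have hAu : A u = 0 := hFu
  have hfix : ∀ t : ℝ, exp (t • A) u = u := by
    have hd : ∀ t : ℝ, HasDerivAt (fun s : ℝ => exp (s • A) u) 0 t := by
      intro t
      have h1 := (hasDerivAt_exp_smul_const (𝕂 := ℝ) A t).clm_apply (hasDerivAt_const t u)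
      simpa [hAu] using h1
    intro t
    have := is_const_of_deriv_eq_zero (f := fun s : ℝ => exp (s • A) u)
      (fun s => (hd s).differentiableAt) (fun s => (hd s).deriv) t 0
    simpa [exp_zero] using this
  -- the differential of `h` at `u` is invariant under the flow
  have hstep3 : ∀ (t : ℝ) (y : E), fderiv ℝ h u (exp (t • A) y) = fderiv ℝ h u y := by
    intro t y
    have hfun : ∀ s : ℝ, h (u + s • (exp (t • A) y)) = h (u + s • y) := by
      intro s
      have := hconst (u + s • y) t
      rwa [map_add, hfix t, map_smul] at this
    have hder : ∀ v : E, HasDerivAt (fun s : ℝ => h (u + s • v)) (fderiv ℝ h u v) 0 := by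
      intro v
      have hlin : HasDerivAt (fun s : ℝ => u + s • v) v 0 := by
        simpa using ((hasDerivAt_id (0:ℝ)).smul_const v).const_add u
      have hpt : u + (0:ℝ) • v = u := by simp
      have hfd : HasFDerivAt h (fderiv ℝ h u) (u + (0:ℝ) • v) := by
        rw [hpt]; exact (hhd u).hasFDerivAt
      have := hfd.comp_hasDerivAt 0 hlin
      exact this
    have h1 := hder (exp (t • A) y)
    have h2 := hder y
    rw [funext hfun] at h1
    exact h1.unique h2
  -- differentiate at `t = 0`
  have hstep4 : ∀ y : E, fderiv ℝ h u (A y) = 0 := by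
    intro y
    have hc : (fun t : ℝ => fderiv ℝ h u (exp (t • A) y)) = fun _ => fderiv ℝ h u y :=
      funext fun t => hstep3 t y
    have hd : HasDerivAt (fun t : ℝ => fderiv ℝ h u (exp (t • A) y))
        (fderiv ℝ h u (A (exp ((0:ℝ) • A) y))) 0 :=
      ((fderiv ℝ h u).hasFDerivAt).comp_hasDerivAt 0 (hflow y 0)
    rw [hc] at hd
    have h0 : fderiv ℝ h u (A (exp ((0:ℝ) • A) y)) = 0 :=
      hd.unique (hasDerivAt_const 0 _)
    simpa [exp_zero] using h0
  -- conclude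
  have hall : ∀ y : E, ⟪bk (gradient h u) F, y⟫ = 0 := by
    intro y
    rw [hinv]
    have : (A y : E) = bk F y := rfl
    rw [grad_inner', ← this, hstep4 y]
  have hz : bk (gradient h u) F = 0 := by
    have := hall (bk (gradient h u) F)
    rwa [inner_self_eq_zero] at this
  rw [bk_skew' bk hskew F (gradient h u), hz, neg_zero]

end Aux

/-- shifted invariants Poisson commute (Mishchenko–Fomenko argument shift).
If `f` and `h` are adjoint-invariant differentiable functions on a Lie algebra `E` with
invariant inner product, then for all `l, m ∈ ℝ` the functions `x ↦ f(x + l a)` and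
`x ↦ h(x + m a)` Lie–Poisson commute: since `∇(f(·+l a))(x) = ∇f(x+l a)`, this reads
`⟨x, [∇f(x + l a), ∇h(x + m a)]⟩ = 0` for every `x`. -/
theorem argument_shift_invariants_commute
    {E : Type*} [NormedAddCommGroup E] [InnerProductSpace ℝ E] [FiniteDimensional ℝ E]
    (bk : E →ₗ[ℝ] E →ₗ[ℝ] E)
    (hskew : ∀ x : E, bk x x = 0)
    (hjac : ∀ x y z : E, bk x (bk y z) = bk (bk x y) z + bk y (bk x z))
    (hinv : ∀ x y z : E, ⟪bk x y, z⟫ = ⟪x, bk y z⟫)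
    (f h : E → ℝ) (hfd : Differentiable ℝ f) (hhd : Differentiable ℝ h)
    (hf : ∀ z : E, bk (gradient f z) z = 0)
    (hh : ∀ z : E, bk (gradient h z) z = 0)
    (a : E) :
    ∀ (l m : ℝ) (x : E), ⟪x, bk (gradient f (x + l • a)) (gradient h (x + m • a))⟫ = 0 := by
  intro l m x
  set u := x + l • a with hu
  set v := x + m • a with hv
  set F := gradient f u with hF
  set H := gradient h v with hH
  by_cases hlm : l = m
  · -- same shift point: gradients commute by the key lemma
    subst hlm
    have hvu : v = u := by rw [hv, hu]
    have hz : bk F (gradient h u) = 0 :=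
      bk_grad_of_bk_eq_zero bk hskew hinv h hhd hh F u (hf u)
    rw [hH, hvu, hz, inner_zero_right]
  · -- distinct shifts: algebraic argument
    have h1 : ⟪u, bk F H⟫ = 0 := by
      rw [← hinv u F H, bk_skew' bk hskew u F, hf u]
      simp
    have h2 : ⟪v, bk F H⟫ = 0 := by
      rw [bk_skew' bk hskew F H, inner_neg_right, ← hinv v H F,
        bk_skew' bk hskew v H, hh v]
      simp
    have hx : (m - l) • x = m • u - l • v := by
      rw [hu, hv]; module
    have : (m - l) * ⟪x, bk F H⟫ = 0 := by
      rw [← real_inner_smul_left, hx]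
      rw [inner_sub_left, real_inner_smul_left, real_inner_smul_left, h1, h2]
      ring
    rcases mul_eq_zero.mp this with h3 | h3
    · exact absurd (sub_eq_zero.mp h3).symm hlm
    · exact h3
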